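/- For every integer k ≥ 2, the generalized Petersen graph GP(2k, k) has star chromatic index at most 5, i.e., χ'_s(GP(2k, k)) ≤ 5. -/

import Mathlib

/-- The generalized Petersen graph `GP(n, k)`: vertices are `Sum.inl i = u_i` (outer) and
`Sum.inr i = v_i` (inner) for `i : ZMod n`, with edges `u_i u_{i+1}`, `v_i v_{i+k}` and the
spokes `u_i v_i`, indices taken modulo `n`. -/
def genPetersen (n k : ℕ) : SimpleGraph (ZMod n ⊕ ZMod n) :=
  SimpleGraph.fromRel (fun x y =>
    match x, y with
    | Sum.inl i, Sum.inl j => j = i + 1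
    | Sum.inr i, Sum.inr j => j = i + (k : ZMod n)
    | Sum.inl i, Sum.inr j => i = j
    | Sum.inr _, Sum.inl _ => False)

/-- `c` is a star edge coloring of `G`: it is a proper edge coloring (distinct edges of `G`
sharing a vertex receive different colors) and no path with four edges and no cycle with
four edges is bicolored (i.e. colored with exactly two colors). -/
def IsStarEdgeColoring {V α : Type*} [DecidableEq α] (G : SimpleGraph V)
    (c : Sym2 V → α) : Prop :=
  (∀ e₁ ∈ G.edgeSet, ∀ e₂ ∈ G.edgeSet, e₁ ≠ e₂ → (∃ v, v ∈ e₁ ∧ v ∈ e₂) → c e₁ ≠ c e₂) ∧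
  (∀ (u v : V) (p : G.Walk u v), p.IsPath → p.length = 4 →
      (p.edges.map c).toFinset.card ≠ 2) ∧
  (∀ (u : V) (p : G.Walk u u), p.IsCycle → p.length = 4 →
      (p.edges.map c).toFinset.card ≠ 2)


open Sum

def pat (r : ℕ) : Fin 5 := if r % 4 = 1 then 1 else if r % 4 = 3 then 2 else 0

def out' (k m : ℕ) : Fin 5 :=
  if k % 2 = 1 ∧ m % (2*k) = 2*k-2 then 1
  else if k % 2 = 1 ∧ m % (2*k) = 2*k-1 then 2
  else pat (m % (2*k))

lemma out'_mod (k m : ℕ) : out' k (m % (2*k)) = out' k m := by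
  unfold out'
  rw [Nat.mod_mod_of_dvd _ dvd_rfl]

lemma hOut' (k m : ℕ) : out' k m = 0 ∨ out' k m = 1 ∨ out' k m = 2 := by
  unfold out' pat
  split_ifs <;> simp

lemma pat0 {r : ℕ} (h : r % 4 = 0) : pat r = 0 := by simp [pat, h]
lemma pat1 {r : ℕ} (h : r % 4 = 1) : pat r = 1 := by simp [pat, h]
lemma pat2 {r : ℕ} (h : r % 4 = 2) : pat r = 0 := by simp [pat, h]
lemma pat3 {r : ℕ} (h : r % 4 = 3) : pat r = 2 := by simp [pat, h]

lemma out'_n2 {k m : ℕ} (h1 : k % 2 = 1) (h : m % (2*k) = 2*k-2) : out' k m = 1 := by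
  unfold out'; rw [if_pos ⟨h1, h⟩]

lemma out'_n1 {k m : ℕ} (h1 : k % 2 = 1) (h2 : 2 ≤ k) (h : m % (2*k) = 2*k-1) :
    out' k m = 2 := by
  unfold out'; rw [if_neg (by omega), if_pos ⟨h1, h⟩]

lemma out'_pat {k m : ℕ} (h1 : ¬(k % 2 = 1 ∧ m % (2*k) = 2*k-2))
    (h2 : ¬(k % 2 = 1 ∧ m % (2*k) = 2*k-1)) : out' k m = pat (m % (2*k)) := by
  unfold out'; rw [if_neg h1, if_neg h2]

-- mod facts
lemma mod_succ (k : ℕ) (hk : 2 ≤ k) (m : ℕ) (h : m % (2*k) ≠ 2*k-1) :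
    (m+1) % (2*k) = m % (2*k) + 1 := by
  have hr : m % (2*k) < 2*k := Nat.mod_lt _ (by omega)
  rw [← Nat.mod_add_mod]; exact Nat.mod_eq_of_lt (by omega)

lemma mod_wrap (k : ℕ) (hk : 2 ≤ k) (m : ℕ) (h : m % (2*k) = 2*k-1) :
    (m+1) % (2*k) = 0 := by
  rw [← Nat.mod_add_mod, h, show 2*k-1+1 = 2*k by omega, Nat.mod_self]

lemma P1 (k : ℕ) (hk : 2 ≤ k) (m : ℕ) : out' k m ≠ out' k (m+1) := by
  have hr : m % (2*k) < 2*k := Nat.mod_lt _ (by omega)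
  by_cases hko : k % 2 = 1
  · have hk4 : 2*k % 4 = 2 := by omega
    by_cases hA : m % (2*k) = 2*k-1
    · rw [out'_n1 hko hk hA, out'_pat (by rw [mod_wrap k hk m hA]; omega)
        (by rw [mod_wrap k hk m hA]; omega), mod_wrap k hk m hA, pat0 (by omega)]
      decide
    · have h1 := mod_succ k hk m hA
      by_cases hB : m % (2*k) = 2*k-2
      · rw [out'_n2 hko hB, out'_n1 hko hk (by omega), ]; decide
      · rw [out'_pat (by omega) (by omega)]
        by_cases hC : m % (2*k) = 2*k-3
        · rw [out'_n2 hko (by omega), pat3 (by omega)]; decide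
        · rw [out'_pat (by omega) (by omega), h1]
          have h4 : m % (2*k) % 4 = 0 ∨ m % (2*k) % 4 = 1 ∨ m % (2*k) % 4 = 2
              ∨ m % (2*k) % 4 = 3 := by omega
          rcases h4 with h|h|h|h <;>
            rw [show pat (m % (2*k)) = _ from by first | exact pat0 h | exact pat1 h | exact pat2 h | exact pat3 h,
                show pat (m % (2*k) + 1) = _ from by
                  first | exact pat0 (by omega) | exact pat1 (by omega) | exact pat2 (by omega) | exact pat3 (by omega)] <;>
            decide
  · rw [out'_pat (by omega) (by omega), out'_pat (by omega) (by omega)]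
    have hk4 : 2*k % 4 = 0 := by omega
    by_cases hA : m % (2*k) = 2*k-1
    · rw [mod_wrap k hk m hA, pat3 (by omega), pat0 (by omega)]; decide
    · rw [mod_succ k hk m hA]
      have h4 : m % (2*k) % 4 = 0 ∨ m % (2*k) % 4 = 1 ∨ m % (2*k) % 4 = 2
          ∨ m % (2*k) % 4 = 3 := by omega
      rcases h4 with h|h|h|h <;>
        rw [show pat (m % (2*k)) = _ from by first | exact pat0 h | exact pat1 h | exact pat2 h | exact pat3 h,
            show pat (m % (2*k) + 1) = _ from by
              first | exact pat0 (by omega) | exact pat1 (by omega) | exact pat2 (by omega) | exact pat3 (by omega)] <;>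
        decide

lemma out'_patO {k m : ℕ} (h : k % 2 = 1) (hlt : m % (2*k) < 2*k - 2) :
    out' k m = pat (m % (2*k)) := out'_pat (by omega) (by omega)

lemma out'_patE {k m : ℕ} (h : k % 2 = 0) : out' k m = pat (m % (2*k)) :=
  out'_pat (by omega) (by omega)


lemma P2 (k : ℕ) (hk : 2 ≤ k) (m : ℕ) (hA : out' k m = out' k (m+2))
    (hB : out' k (m+1) = out' k (m+3)) : False := by
  have hr : m % (2*k) < 2*k := Nat.mod_lt _ (by omega)
  by_cases hko : k % 2 = 1
  · have hk4 : 2*k % 4 = 2 := by omega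
    have hk6 : 6 ≤ 2*k := by omega
    rcases (show m % (2*k) = 2*k-1 ∨ m % (2*k) = 2*k-2 ∨ m % (2*k) = 2*k-3
        ∨ m % (2*k) = 2*k-4 ∨ m % (2*k) = 2*k-5 ∨ m % (2*k) ≤ 2*k-6 from by omega)
      with h|h|h|h|h|h
    · -- r = 2k-1 : colors 2, 0, 1, 0 ; hA : 2 = 1
      have h1 : (m+1) % (2*k) = 0 := mod_wrap k hk m h
      have h2 : (m+2) % (2*k) = 1 := by
        rw [show m+2 = (m+1)+1 from rfl, ← Nat.mod_add_mod, h1,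
          show (0+1 : ℕ) = 1 from rfl]
        exact Nat.mod_eq_of_lt (by omega)
      rw [out'_n1 hko hk h, out'_patO (m := m+2) hko (by omega), h2,
        pat1 (r := 1) (by omega)] at hA
      exact absurd hA (by decide)
    · -- r = 2k-2 : colors 1, 2, 0, 1 ; hA : 1 = 0
      have h1 : (m+1) % (2*k) = 2*k-1 := by rw [mod_succ k hk m (by omega)]; omega
      have h2 : (m+2) % (2*k) = 0 := by
        rw [show m+2 = (m+1)+1 from rfl]; exact mod_wrap k hk (m+1) h1
      rw [out'_n2 hko h, out'_patO (m := m+2) hko (by omega), h2,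
        pat0 (r := 0) (by omega)] at hA
      exact absurd hA (by decide)
    · -- r = 2k-3 : colors 2, 1, 2, 0 ; hB : 1 = 0
      have h1 : (m+1) % (2*k) = 2*k-2 := by rw [mod_succ k hk m (by omega)]; omega
      have h2 : (m+2) % (2*k) = 2*k-1 := by
        rw [show m+2 = (m+1)+1 from rfl, mod_succ k hk (m+1) (by omega)]; omega
      have h3 : (m+3) % (2*k) = 0 := by
        rw [show m+3 = (m+2)+1 from rfl]; exact mod_wrap k hk (m+2) h2
      rw [out'_n2 hko h1, out'_patO (m := m+3) hko (by omega), h3,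
        pat0 (r := 0) (by omega)] at hB
      exact absurd hB (by decide)
    · -- r = 2k-4 : colors 0, 2, 1, 2 ; hA : 0 = 1
      have h1 : (m+1) % (2*k) = 2*k-3 := by rw [mod_succ k hk m (by omega)]; omega
      have h2 : (m+2) % (2*k) = 2*k-2 := by
        rw [show m+2 = (m+1)+1 from rfl, mod_succ k hk (m+1) (by omega)]; omega
      rw [out'_patO (m := m) hko (by omega), out'_n2 hko h2,
        pat2 (r := m % (2*k)) (by omega)] at hA
      exact absurd hA (by decide)
    · -- r = 2k-5 : colors 1, 0, 2, 1 ; hA : 1 = 2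
      have h1 : (m+1) % (2*k) = 2*k-4 := by rw [mod_succ k hk m (by omega)]; omega
      have h2 : (m+2) % (2*k) = 2*k-3 := by
        rw [show m+2 = (m+1)+1 from rfl, mod_succ k hk (m+1) (by omega)]; omega
      rw [out'_patO (m := m) hko (by omega), out'_patO (m := m+2) hko (by omega),
        h2, pat3 (r := 2*k-3) (by omega), pat1 (r := m % (2*k)) (by omega)] at hA
      exact absurd hA (by decide)
    · -- r ≤ 2k-6 : plain pattern
      have h1 : (m+1) % (2*k) = m % (2*k) + 1 := mod_succ k hk m (by omega)
      have h2 : (m+2) % (2*k) = m % (2*k) + 2 := by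
        rw [show m+2 = (m+1)+1 from rfl, mod_succ k hk (m+1) (by omega)]; omega
      have h3 : (m+3) % (2*k) = m % (2*k) + 3 := by
        rw [show m+3 = (m+2)+1 from rfl, mod_succ k hk (m+2) (by omega)]; omega
      rw [out'_patO (m := m) hko (by omega), out'_patO (m := m+2) hko (by omega),
        h2] at hA
      rw [out'_patO (m := m+1) hko (by omega), out'_patO (m := m+3) hko (by omega),
        h1, h3] at hB
      rcases (show m % (2*k) % 4 = 0 ∨ m % (2*k) % 4 = 1 ∨ m % (2*k) % 4 = 2
          ∨ m % (2*k) % 4 = 3 from by omega) with h4|h4|h4|h4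
      · rw [pat1 (r := m % (2*k) + 1) (by omega),
          pat3 (r := m % (2*k) + 3) (by omega)] at hB
        exact absurd hB (by decide)
      · rw [pat1 (r := m % (2*k)) (by omega),
          pat3 (r := m % (2*k) + 2) (by omega)] at hA
        exact absurd hA (by decide)
      · rw [pat3 (r := m % (2*k) + 1) (by omega),
          pat1 (r := m % (2*k) + 3) (by omega)] at hB
        exact absurd hB (by decide)
      · rw [pat3 (r := m % (2*k)) (by omega),
          pat1 (r := m % (2*k) + 2) (by omega)] at hA
        exact absurd hA (by decide)
  · -- k even
    have hke : k % 2 = 0 := by omega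
    have hdvd : (4:ℕ) ∣ 2*k := by omega
    rw [out'_patE (m := m) hke, out'_patE (m := m+2) hke] at hA
    rw [out'_patE (m := m+1) hke, out'_patE (m := m+3) hke] at hB
    have e0 : m % (2*k) % 4 = m % 4 := by rw [Nat.mod_mod_of_dvd _ hdvd]
    have e1 : (m+1) % (2*k) % 4 = (m+1) % 4 := by rw [Nat.mod_mod_of_dvd _ hdvd]
    have e2 : (m+2) % (2*k) % 4 = (m+2) % 4 := by rw [Nat.mod_mod_of_dvd _ hdvd]
    have e3 : (m+3) % (2*k) % 4 = (m+3) % 4 := by rw [Nat.mod_mod_of_dvd _ hdvd]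
    rcases (show m % 4 = 0 ∨ m % 4 = 1 ∨ m % 4 = 2 ∨ m % 4 = 3 from by omega)
      with h4|h4|h4|h4
    · rw [pat1 (r := (m+1) % (2*k)) (by omega),
        pat3 (r := (m+3) % (2*k)) (by omega)] at hB
      exact absurd hB (by decide)
    · rw [pat1 (r := m % (2*k)) (by omega),
        pat3 (r := (m+2) % (2*k)) (by omega)] at hA
      exact absurd hA (by decide)
    · rw [pat3 (r := (m+1) % (2*k)) (by omega),
        pat1 (r := (m+3) % (2*k)) (by omega)] at hB
      exact absurd hB (by decide)
    · rw [pat3 (r := m % (2*k)) (by omega),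
        pat1 (r := (m+2) % (2*k)) (by omega)] at hA
      exact absurd hA (by decide)

-- ZMod facts
lemma hne1 (k : ℕ) (hk : 2 ≤ k) : (1 : ZMod (2*k)) ≠ 0 := by
  haveI : NeZero (2*k) := ⟨by omega⟩
  intro h
  rw [show (1 : ZMod (2*k)) = ((1:ℕ) : ZMod (2*k)) by push_cast; ring] at h
  rw [ZMod.natCast_eq_zero_iff] at h
  have := Nat.le_of_dvd one_pos h
  omega

lemma hne2 (k : ℕ) (hk : 2 ≤ k) : (2 : ZMod (2*k)) ≠ 0 := by
  haveI : NeZero (2*k) := ⟨by omega⟩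
  intro h
  rw [show (2 : ZMod (2*k)) = ((2:ℕ) : ZMod (2*k)) by push_cast; ring] at h
  rw [ZMod.natCast_eq_zero_iff] at h
  have := Nat.le_of_dvd (by norm_num) h
  omega

lemma hknz (k : ℕ) (hk : 2 ≤ k) : (k : ZMod (2*k)) ≠ 0 := by
  haveI : NeZero (2*k) := ⟨by omega⟩
  intro h
  rw [ZMod.natCast_eq_zero_iff] at h
  have := Nat.le_of_dvd (by omega) h
  omega

lemma hkk (k : ℕ) : ((k : ZMod (2*k)) + k) = 0 := by
  rw [← Nat.cast_add, show k + k = 2*k by ring, ZMod.natCast_self]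

lemma val_succ (k : ℕ) (hk : 2 ≤ k) (i : ZMod (2*k)) :
    (i + 1).val = (i.val + 1) % (2*k) := by
  haveI : NeZero (2*k) := ⟨by omega⟩
  haveI : Fact (1 < 2*k) := ⟨by omega⟩
  rw [ZMod.val_add, ZMod.val_one]

lemma LA (k : ℕ) (hk : 2 ≤ k) (i : ZMod (2*k)) :
    out' k i.val ≠ out' k (i+1).val := by
  rw [val_succ k hk i, out'_mod]
  exact P1 k hk i.val

lemma L2star (k : ℕ) (hk : 2 ≤ k) (i : ZMod (2*k))
    (hA : out' k i.val = out' k (i+1+1).val)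
    (hB : out' k (i+1).val = out' k (i+1+1+1).val) : False := by
  have e1 : (i+1).val = (i.val + 1) % (2*k) := val_succ k hk i
  have e2 : (i+1+1).val = (i.val + 2) % (2*k) := by
    rw [val_succ k hk (i+1), e1, Nat.mod_add_mod]
  have e3 : (i+1+1+1).val = (i.val + 3) % (2*k) := by
    rw [val_succ k hk (i+1+1), e2, Nat.mod_add_mod]
  rw [e2, out'_mod] at hA
  rw [e1, e3, out'_mod, out'_mod] at hB
  exact P2 k hk i.val hA hB

-- the coloring
def col (k : ℕ) : (ZMod (2*k) ⊕ ZMod (2*k)) → (ZMod (2*k) ⊕ ZMod (2*k)) → Fin 5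
  | inl i, inl j =>
      if j = i + 1 ∧ ¬ i = j + 1 then out' k i.val
      else if i = j + 1 ∧ ¬ j = i + 1 then out' k j.val
      else 0
  | inr _, inr _ => 4
  | _, _ => 3

lemma col_symm (k : ℕ) (x y : ZMod (2*k) ⊕ ZMod (2*k)) : col k x y = col k y x := by
  rcases x with i|i <;> rcases y with j|j
  · simp only [col]
    split_ifs <;> first | rfl | tauto
  · rfl
  · rfl
  · rfl

def colF (k : ℕ) : Sym2 (ZMod (2*k) ⊕ ZMod (2*k)) → Fin 5 :=
  Sym2.lift ⟨col k, col_symm k⟩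

lemma colS (k : ℕ) (i j : ZMod (2*k)) : colF k s(inl i, inr j) = 3 := rfl
lemma colS' (k : ℕ) (i j : ZMod (2*k)) : colF k s(inr i, inl j) = 3 := rfl
lemma colM (k : ℕ) (i j : ZMod (2*k)) : colF k s(inr i, inr j) = 4 := rfl

lemma colO (k : ℕ) (hk : 2 ≤ k) (i j : ZMod (2*k)) (h : j = i + 1) :
    colF k s(inl i, inl j) = out' k i.val := by
  subst h
  have h2 : ¬ i = (i+1) + 1 := fun hh => hne2 k hk (by linear_combination -hh)
  simp [colF, Sym2.lift_mk, col, h2]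

lemma colO' (k : ℕ) (hk : 2 ≤ k) (i j : ZMod (2*k)) (h : i = j + 1) :
    colF k s(inl i, inl j) = out' k j.val := by
  subst h
  have h2 : ¬ j = (j+1) + 1 := fun hh => hne2 k hk (by linear_combination -hh)
  simp [colF, Sym2.lift_mk, col, h2]

lemma colO_rfl (k : ℕ) (hk : 2 ≤ k) (i : ZMod (2*k)) :
    colF k s(inl i, inl (i+1)) = out' k i.val := colO k hk i _ rfl

lemma colO'_rfl (k : ℕ) (hk : 2 ≤ k) (i : ZMod (2*k)) :
    colF k s(inl (i+1), inl i) = out' k i.val := colO' k hk _ i rfl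

lemma colL_cases (k : ℕ) (i j : ZMod (2*k)) :
    colF k s(inl i, inl j) = 0 ∨ colF k s(inl i, inl j) = 1 ∨ colF k s(inl i, inl j) = 2 := by
  have h1 := hOut' k i.val
  have h2 := hOut' k j.val
  show col k (inl i) (inl j) = 0 ∨ col k (inl i) (inl j) = 1 ∨ col k (inl i) (inl j) = 2
  simp only [col]
  split_ifs
  · exact h1
  · exact h2
  · exact Or.inl rfl

lemma colL_ne3 (k : ℕ) (i j : ZMod (2*k)) : colF k s(inl i, inl j) ≠ 3 := by
  rcases colL_cases k i j with h|h|h <;> rw [h] <;> decide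

lemma colL_ne4 (k : ℕ) (i j : ZMod (2*k)) : colF k s(inl i, inl j) ≠ 4 := by
  rcases colL_cases k i j with h|h|h <;> rw [h] <;> decide

-- adjacency characterizations
lemma adj_ll (k : ℕ) (hk : 2 ≤ k) (i j : ZMod (2*k)) :
    (genPetersen (2*k) k).Adj (inl i) (inl j) ↔ (j = i + 1 ∨ i = j + 1) := by
  rw [genPetersen, SimpleGraph.fromRel_adj]
  constructor
  · rintro ⟨-, h|h⟩
    · exact Or.inl h
    · exact Or.inr h
  · rintro (h|h)
    · subst h
      refine ⟨?_, Or.inl rfl⟩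
      intro hh
      rw [Sum.inl.injEq] at hh
      exact hne1 k hk (by linear_combination -hh)
    · subst h
      refine ⟨?_, Or.inr rfl⟩
      intro hh
      rw [Sum.inl.injEq] at hh
      exact hne1 k hk (by linear_combination hh)

lemma adj_lr (k : ℕ) (i j : ZMod (2*k)) :
    (genPetersen (2*k) k).Adj (inl i) (inr j) ↔ i = j := by
  rw [genPetersen, SimpleGraph.fromRel_adj]
  constructor
  · rintro ⟨-, h|h⟩
    · exact h
    · exact h.elim
  · intro h
    exact ⟨by simp, Or.inl h⟩

lemma adj_rl (k : ℕ) (i j : ZMod (2*k)) :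
    (genPetersen (2*k) k).Adj (inr i) (inl j) ↔ j = i := by
  rw [genPetersen, SimpleGraph.fromRel_adj]
  constructor
  · rintro ⟨-, h|h⟩
    · exact h.elim
    · exact h
  · intro h
    exact ⟨by simp, Or.inr h⟩

lemma adj_rr (k : ℕ) (hk : 2 ≤ k) (i j : ZMod (2*k)) :
    (genPetersen (2*k) k).Adj (inr i) (inr j) ↔ j = i + (k : ZMod (2*k)) := by
  rw [genPetersen, SimpleGraph.fromRel_adj]
  constructor
  · rintro ⟨-, h|h⟩
    · exact h
    · linear_combination -h - hkk k
  · intro h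
    subst h
    refine ⟨?_, Or.inl rfl⟩
    intro hh
    rw [Sum.inr.injEq] at hh
    exact hknz k hk (by linear_combination -hh)

lemma edge_ne {α : Type*} {a b c : α} (hab : a ≠ b) (hac : a ≠ c) :
    s(a,b) ≠ s(b,c) := by
  intro he
  rw [Sym2.eq_iff] at he
  rcases he with ⟨h,-⟩|⟨h,-⟩
  exacts [hab h, hac h]

lemma edge_form (k : ℕ) (hk : 2 ≤ k) (e : Sym2 (ZMod (2*k) ⊕ ZMod (2*k)))
    (he : e ∈ (genPetersen (2*k) k).edgeSet) :
    (∃ i, e = s(inl i, inl (i+1))) ∨ (∃ i, e = s(inr i, inr (i + (k:ZMod (2*k))))) ∨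
      (∃ i, e = s(inl i, inr i)) := by
  induction e using Sym2.ind with
  | _ x y =>
    rw [SimpleGraph.mem_edgeSet] at he
    rcases x with a|a <;> rcases y with b|b
    · rcases (adj_ll k hk a b).mp he with h|h
      · exact Or.inl ⟨a, by rw [h]⟩
      · exact Or.inl ⟨b, by rw [h, Sym2.eq_swap]⟩
    · exact Or.inr (Or.inr ⟨a, by rw [← (adj_lr k a b).mp he]⟩)
    · exact Or.inr (Or.inr ⟨a, by rw [(adj_rl k a b).mp he, Sym2.eq_swap]⟩)
    · exact Or.inr (Or.inl ⟨a, by rw [(adj_rr k hk a b).mp he]⟩)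

lemma proper (k : ℕ) (hk : 2 ≤ k) :
    ∀ e₁ ∈ (genPetersen (2*k) k).edgeSet, ∀ e₂ ∈ (genPetersen (2*k) k).edgeSet,
      e₁ ≠ e₂ → (∃ v, v ∈ e₁ ∧ v ∈ e₂) → colF k e₁ ≠ colF k e₂ := by
  intro e₁ h₁ e₂ h₂ hne hsh
  rcases edge_form k hk e₁ h₁ with ⟨i, rfl⟩|⟨i, rfl⟩|⟨i, rfl⟩ <;>
    rcases edge_form k hk e₂ h₂ with ⟨j, rfl⟩|⟨j, rfl⟩|⟨j, rfl⟩
  · -- O O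
    obtain ⟨v, hv1, hv2⟩ := hsh
    rw [Sym2.mem_iff] at hv1 hv2
    rw [colO_rfl k hk i, colO_rfl k hk j]
    rcases hv1 with rfl|rfl <;> rcases hv2 with h|h <;> rw [Sum.inl.injEq] at h
    · exact absurd (by rw [h]) hne
    · intro hc; rw [h] at hc; exact LA k hk j hc.symm
    · intro hc; rw [← h] at hc; exact LA k hk i hc
    · have h' : i = j := by linear_combination h
      exact absurd (by rw [h']) hne
  · -- O M
    rw [colM]; exact colL_ne4 k _ _
  · -- O S
    rw [colS]; exact colL_ne3 k _ _
  · -- M O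
    rw [colM]; exact fun hc => colL_ne4 k _ _ hc.symm
  · -- M M
    obtain ⟨v, hv1, hv2⟩ := hsh
    rw [Sym2.mem_iff] at hv1 hv2
    rcases hv1 with rfl|rfl <;> rcases hv2 with h|h <;> rw [Sum.inr.injEq] at h
    · exact absurd (by rw [h]) hne
    · exact absurd (by rw [h, add_assoc, hkk k, add_zero, Sym2.eq_swap]) hne
    · exact absurd (by rw [← h, add_assoc, hkk k, add_zero, Sym2.eq_swap]) hne
    · have h' : i = j := by linear_combination h
      exact absurd (by rw [h']) hne
  · -- M S
    rw [colM, colS]; decide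
  · -- S O
    rw [colS]; exact fun hc => colL_ne3 k _ _ hc.symm
  · -- S M
    rw [colS, colM]; decide
  · -- S S
    obtain ⟨v, hv1, hv2⟩ := hsh
    rw [Sym2.mem_iff] at hv1 hv2
    rcases hv1 with rfl|rfl <;> rcases hv2 with h|h
    · rw [Sum.inl.injEq] at h
      exact absurd (by rw [h]) hne
    · exact absurd h (by simp)
    · exact absurd h (by simp)
    · rw [Sum.inr.injEq] at h
      exact absurd (by rw [h]) hne

lemma two_col : ∀ a b c d : Fin 5, a ≠ b → b ≠ c → c ≠ d →
    ({a,b,c,d} : Finset (Fin 5)).card = 2 → a = c ∧ b = d := by decide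

theorem stmt_8 (k : ℕ) (hk : 2 ≤ k) :
    ∃ c : Sym2 (ZMod (2 * k) ⊕ ZMod (2 * k)) → Fin 5,
      IsStarEdgeColoring (genPetersen (2 * k) k) c := by
  refine ⟨colF k, proper k hk, ?_, ?_⟩
  · -- no bicolored path of length 4
    intro u v p hp hlen
    cases p with
    | nil => simp at hlen
    | cons h01 p =>
    rename_i w1
    cases p with
    | nil => simp at hlen
    | cons h12 p =>
    rename_i w2
    cases p with
    | nil => simp at hlen
    | cons h23 p =>
    rename_i w3
    cases p with
    | nil => simp at hlen
    | cons h34 p =>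
    rename_i w4
    cases p with
    | cons h45 p => simp [SimpleGraph.Walk.length_cons] at hlen
    | nil =>
    simp only [SimpleGraph.Walk.isPath_def, SimpleGraph.Walk.support_cons,
      SimpleGraph.Walk.support_nil, List.nodup_cons, List.mem_cons,
      List.mem_singleton, List.not_mem_nil, or_false, not_or] at hp
    obtain ⟨⟨h01d, h02d, h03d, h04d⟩, ⟨h12d, h13d, h14d⟩, ⟨h23d, h24d⟩, h34d, -⟩ := hp
    simp only [SimpleGraph.Walk.edges_cons, SimpleGraph.Walk.edges_nil,
      List.map_cons, List.map_nil, List.toFinset_cons, List.toFinset_nil,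
      LawfulSingleton.insert_empty_eq]
    intro hcard
    have hd12 : colF k s(u, w1) ≠ colF k s(w1, w2) :=
      proper k hk _ ((SimpleGraph.mem_edgeSet _).mpr h01) _ ((SimpleGraph.mem_edgeSet _).mpr h12)
        (edge_ne h01d h02d) ⟨w1, by simp, by simp⟩
    have hd23 : colF k s(w1, w2) ≠ colF k s(w2, w3) :=
      proper k hk _ ((SimpleGraph.mem_edgeSet _).mpr h12) _ ((SimpleGraph.mem_edgeSet _).mpr h23)
        (edge_ne h12d h13d) ⟨w2, by simp, by simp⟩
    have hd34 : colF k s(w2, w3) ≠ colF k s(w3, v) :=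
      proper k hk _ ((SimpleGraph.mem_edgeSet _).mpr h23) _ ((SimpleGraph.mem_edgeSet _).mpr h34)
        (edge_ne h23d h24d) ⟨w3, by simp, by simp⟩
    obtain ⟨hc13, hc24⟩ := two_col _ _ _ _ hd12 hd23 hd34 hcard
    clear hd12 hd23 hd34 hcard hlen h01d h03d h04d h12d h14d h23d h34d
    rcases u with a0|a0 <;> rcases w1 with a1|a1 <;> rcases w2 with a2|a2 <;>
      rcases w3 with a3|a3 <;> rcases v with a4|a4 <;>
      simp only [adj_ll k hk, adj_lr k, adj_rl k, adj_rr k hk] at h01 h12 h23 h34 <;>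
      subst_vars <;>
      (try simp only [colS, colS', colM] at hc13) <;>
      (try simp only [colS, colS', colM] at hc24) <;>
      first
      | exact h02d rfl
      | exact h13d rfl
      | exact h24d rfl
      | exact h02d (by rw [add_assoc, hkk k, add_zero])
      | exact h13d (by rw [add_assoc, hkk k, add_zero])
      | exact h24d (by rw [add_assoc, hkk k, add_zero])
      | exact colL_ne3 k _ _ hc13
      | exact colL_ne3 k _ _ hc13.symm
      | exact colL_ne4 k _ _ hc13
      | exact colL_ne4 k _ _ hc13.symm
      | exact colL_ne3 k _ _ hc24
      | exact colL_ne3 k _ _ hc24.symm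
      | exact colL_ne4 k _ _ hc24
      | exact colL_ne4 k _ _ hc24.symm
      | (rcases h01 with rfl | h01 <;> rcases h12 with rfl | h12 <;>
         rcases h23 with rfl | h23 <;> rcases h34 with rfl | h34 <;>
         subst_vars <;>
         first
         | exact h02d rfl
         | exact h13d rfl
         | exact h24d rfl
         | exact h02d (congrArg Sum.inl
            (by first | linear_combination h12 | linear_combination -h12))
         | exact h13d (congrArg Sum.inl
            (by first | linear_combination h23 | linear_combination -h23))
         | exact h24d (congrArg Sum.inl
            (by first | linear_combination h34 | linear_combination -h34))
         | (simp only [colO_rfl k hk, colO'_rfl k hk] at hc13 hc24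
            first
            | exact L2star k hk _ hc13 hc24
            | exact L2star k hk _ hc24.symm hc13.symm))
  · -- no bicolored cycle of length 4
    intro u p hp hlen
    cases p with
    | nil => simp at hlen
    | cons h01 p =>
    rename_i w1
    cases p with
    | nil => simp at hlen
    | cons h12 p =>
    rename_i w2
    cases p with
    | nil => simp at hlen
    | cons h23 p =>
    rename_i w3
    cases p with
    | nil => simp at hlen
    | cons h30 p =>
    rename_i w4
    cases p with
    | cons h45 p => simp [SimpleGraph.Walk.length_cons] at hlen
    | nil =>
    have hnd := hp.2
    simp only [SimpleGraph.Walk.support_cons, SimpleGraph.Walk.support_nil,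
      List.tail_cons, List.nodup_cons, List.mem_cons, List.mem_singleton,
      List.not_mem_nil, or_false, not_or] at hnd
    obtain ⟨⟨h12d, h13d, h10d⟩, ⟨h23d, h20d⟩, h30d, -⟩ := hnd
    have h02d : u ≠ w2 := fun h => h20d h.symm
    simp only [SimpleGraph.Walk.edges_cons, SimpleGraph.Walk.edges_nil,
      List.map_cons, List.map_nil, List.toFinset_cons, List.toFinset_nil,
      LawfulSingleton.insert_empty_eq]
    intro hcard
    have hd12 : colF k s(u, w1) ≠ colF k s(w1, w2) :=
      proper k hk _ ((SimpleGraph.mem_edgeSet _).mpr h01) _ ((SimpleGraph.mem_edgeSet _).mpr h12)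
        (edge_ne h01.ne h02d) ⟨w1, by simp, by simp⟩
    have hd23 : colF k s(w1, w2) ≠ colF k s(w2, w3) :=
      proper k hk _ ((SimpleGraph.mem_edgeSet _).mpr h12) _ ((SimpleGraph.mem_edgeSet _).mpr h23)
        (edge_ne h12d h13d) ⟨w2, by simp, by simp⟩
    have hd34 : colF k s(w2, w3) ≠ colF k s(w3, u) :=
      proper k hk _ ((SimpleGraph.mem_edgeSet _).mpr h23) _ ((SimpleGraph.mem_edgeSet _).mpr h30)
        (edge_ne h23d h20d) ⟨w3, by simp, by simp⟩
    obtain ⟨hc13, hc24⟩ := two_col _ _ _ _ hd12 hd23 hd34 hcard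
    clear hd12 hd23 hd34 hcard hlen hp h10d h12d h23d
    rcases u with a0|a0 <;> rcases w1 with a1|a1 <;> rcases w2 with a2|a2 <;>
      rcases w3 with a3|a3 <;>
      simp only [adj_ll k hk, adj_lr k, adj_rl k, adj_rr k hk] at h01 h12 h23 h30 <;>
      subst_vars <;>
      (try simp only [colS, colS', colM] at hc13) <;>
      (try simp only [colS, colS', colM] at hc24) <;>
      first
      | exact h02d rfl
      | exact h13d rfl
      | exact h30d rfl
      | exact h02d (by rw [add_assoc, hkk k, add_zero])
      | exact h13d (by rw [add_assoc, hkk k, add_zero])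
      | exact colL_ne3 k _ _ hc13
      | exact colL_ne3 k _ _ hc13.symm
      | exact colL_ne4 k _ _ hc13
      | exact colL_ne4 k _ _ hc13.symm
      | exact colL_ne3 k _ _ hc24
      | exact colL_ne3 k _ _ hc24.symm
      | exact colL_ne4 k _ _ hc24
      | exact colL_ne4 k _ _ hc24.symm
      | (rcases h01 with rfl | h01 <;> rcases h12 with rfl | h12 <;>
         rcases h23 with rfl | h23 <;>
         subst_vars <;>
         first
         | exact h02d rfl
         | exact h13d rfl
         | exact h02d (congrArg Sum.inl
            (by first | linear_combination h12 | linear_combination -h12))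
         | exact h13d (congrArg Sum.inl
            (by first | linear_combination h23 | linear_combination -h23))
         | (rcases h30 with h30 | h30 <;>
            first
            | exact hne2 k hk (by first | linear_combination h30 | linear_combination -h30)
            | (rw [colO k hk _ _ h30] at hc24
               simp only [colO_rfl k hk] at hc13 hc24
               exact L2star k hk _ hc13 hc24)
            | (rw [colO' k hk _ _ h30] at hc24
               simp only [colO'_rfl k hk] at hc13 hc24
               exact L2star k hk _ hc13.symm hc24)))
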